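/- Let K be a finite index set and let val : K → F and row, col : K → H be functions, and define the bivariate polynomial M(X, Y) = Σ_{w ∈ K} val(w) · L_n(X, row(w)) · L_n(Y, col(w)). Then for all α, β ∈ F with α^n ≠ 1 and β^n ≠ 1 (so in particular α, β ∉ H), M(α, β) = ((α^n − 1)·(β^n − 1)/n²) · Σ_{w ∈ K} val(w)·row(w)·col(w) / ((α − row(w))·(β − col(w))). -/

import Mathlib

open Polynomial

/-- The Lagrange kernel `L_n(x, y) = (1/n)·(1 + ∑_{i=1}^{n-1} x^i · y^(n-i))`. -/
noncomputable def lagrangeKernel {F : Type*} [Field F] (n : ℕ) (x y : F) : F :=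
  (n : F)⁻¹ * (1 + ∑ i ∈ Finset.Ico 1 n, x ^ i * y ^ (n - i))

lemma lagrangeKernel_eval {F : Type*} [Field F] (n : ℕ) (hn0 : 0 < n) (hn : (n : F) ≠ 0)
    {α z : F} (hz : z ^ n = 1) (hα : α ^ n ≠ 1) :
    lagrangeKernel n α z = (α ^ n - 1) * z / ((n : F) * (α - z)) := by
  have hzα : α - z ≠ 0 := sub_ne_zero.mpr (by rintro rfl; exact hα hz)
  have key : 1 + ∑ i ∈ Finset.Ico 1 n, α ^ i * z ^ (n - i)
      = z * ∑ i ∈ Finset.range n, α ^ i * z ^ (n - 1 - i) := by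
    have h1 : ∑ i ∈ Finset.range n, α ^ i * z ^ (n - i)
        = 1 + ∑ i ∈ Finset.Ico 1 n, α ^ i * z ^ (n - i) := by
      rw [Finset.range_eq_Ico, Finset.sum_eq_sum_Ico_succ_bot hn0]
      simp [hz]
    rw [← h1, Finset.mul_sum]
    refine Finset.sum_congr rfl fun i hi => ?_
    have h2 : n - i = (n - 1 - i) + 1 := by
      have := Finset.mem_range.mp hi; omega
    rw [h2, pow_succ]; ring
  have hg := geom_sum₂_mul α z n
  rw [lagrangeKernel, key]
  rw [hz] at hg
  field_simp
  linear_combination z * hg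

theorem sparse_matrix_encoding_sumcheck {F : Type*} [Field F] (n : ℕ) (hn0 : 0 < n)
    (hn : (n : F) ≠ 0) {ι : Type*} (K : Finset ι) (val : ι → F) (row col : ι → F)
    (hrow : ∀ w ∈ K, row w ^ n = 1) (hcol : ∀ w ∈ K, col w ^ n = 1)
    (α β : F) (hα : α ^ n ≠ 1) (hβ : β ^ n ≠ 1) :
    ∑ w ∈ K, val w * lagrangeKernel n α (row w) * lagrangeKernel n β (col w) =
      (α ^ n - 1) * (β ^ n - 1) / (n : F) ^ 2 *
        ∑ w ∈ K, val w * row w * col w / ((α - row w) * (β - col w)) := by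
  rw [Finset.mul_sum]
  refine Finset.sum_congr rfl fun w hw => ?_
  have hra : α - row w ≠ 0 := sub_ne_zero.mpr (by rintro rfl; exact hα (hrow w hw))
  have hcb : β - col w ≠ 0 := sub_ne_zero.mpr (by rintro rfl; exact hβ (hcol w hw))
  rw [lagrangeKernel_eval n hn0 hn (hrow w hw) hα, lagrangeKernel_eval n hn0 hn (hcol w hw) hβ]
  field_simp
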